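/- Let n ≥ 1 and d ≥ 2 be integers and let G be an (n,d)-Ramanujan graph. For every set X of vertices of G, the number of vertices v ∈ X that have fewer than δ(d) neighbors belonging to X is strictly less than n·d^{-1/8}, where δ(d) = (d^{7/8} − d^{5/8})/2. -/

import Mathlib

open Finset

/-- A simple graph `G` on a finite vertex set of cardinality `n` is `(n,d)`-Ramanujan
if it is `d`-regular and every real vector `x` on the vertices whose coordinates sum
to `0` satisfies `‖Ax‖₂ ≤ 2√(d−1)·‖x‖₂`, where `A` is the adjacency matrix of `G`. -/
def IsRamanujan {V : Type*} [Fintype V] [DecidableEq V] (n d : ℕ)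
    (G : SimpleGraph V) [DecidableRel G.Adj] : Prop :=
  Fintype.card V = n ∧ G.IsRegularOfDegree d ∧
    ∀ x : V → ℝ, (∑ v, x v) = 0 →
      Real.sqrt (∑ v, ((G.adjMatrix ℝ).mulVec x v) ^ 2) ≤
        2 * Real.sqrt ((d : ℝ) - 1) * Real.sqrt (∑ v, (x v) ^ 2)

/-- `δ(d) = (d^{7/8} − d^{5/8})/2`. -/
noncomputable def deltaOf (d : ℕ) : ℝ :=
  ((d : ℝ) ^ (7 / 8 : ℝ) - (d : ℝ) ^ (5 / 8 : ℝ)) / 2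

lemma key_poly (t : ℝ) (ht : 1 ≤ t) :
    16 * (t^8 - 1) * (t - 1) ≤ t * (t^7 + t^5)^2 := by
  have hs : 0 ≤ t - 1 := by linarith
  nlinarith [pow_nonneg hs 2, pow_nonneg hs 3, pow_nonneg hs 4, pow_nonneg hs 5,
    pow_nonneg hs 6, pow_nonneg hs 7, pow_nonneg hs 8, pow_nonneg hs 9,
    pow_nonneg hs 10, pow_nonneg hs 11, pow_nonneg hs 12, pow_nonneg hs 13,
    pow_nonneg hs 14, pow_nonneg hs 15]

lemma key_ineq (t : ℝ) (ht : 1 ≤ t) :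
    4 * (t^8 - 1) * (1 - t⁻¹) ≤ ((t^7 + t^5)/2)^2 := by
  have ht0 : 0 < t := by linarith
  have h1 : 1 - t⁻¹ = (t - 1)/t := by field_simp
  rw [h1, div_pow]
  rw [show (4:ℝ) * (t^8-1) * ((t-1)/t) = (4 * (t^8-1) * (t-1))/t by ring,
    div_le_div_iff₀ ht0 (by norm_num : (0:ℝ) < 2^2)]
  nlinarith [key_poly t ht]


set_option maxHeartbeats 1000000 in
open scoped Classical in
/-- in an `(n,d)`-Ramanujan graph with `n ≥ 1`, `d ≥ 2`, for every vertex
set `X` there are fewer than `n·d^{-1/8}` vertices of `X` having fewer than `δ(d)`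
neighbors in `X`. -/
theorem ramanujan_few_bad_vertices {V : Type*} [Fintype V] [DecidableEq V]
    (n d : ℕ) (hn : 1 ≤ n) (hd : 2 ≤ d)
    (G : SimpleGraph V) [DecidableRel G.Adj] (hG : IsRamanujan n d G)
    (X : Finset V) :
    ((X.filter fun v => ((G.neighborFinset v ∩ X).card : ℝ) < deltaOf d).card : ℝ) <
      (n : ℝ) * (d : ℝ) ^ (-(1 / 8 : ℝ)) := by
  classical
  obtain ⟨hcard, hreg, hspec⟩ := hG
  by_contra hcon
  push_neg at hcon
  set B := (X.filter fun v => ((G.neighborFinset v ∩ X).card : ℝ) < deltaOf d) with hBdef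
  set D := (d : ℝ) with hDdef
  have hD2 : (2:ℝ) ≤ D := by rw [hDdef]; exact_mod_cast hd
  have hD0 : (0:ℝ) < D := by linarith
  set t := D ^ ((1:ℝ)/8) with htdef
  have ht0 : (0:ℝ) < t := Real.rpow_pos_of_pos hD0 _
  have ht1 : (1:ℝ) ≤ t := Real.one_le_rpow (by linarith) (by norm_num)
  have ht8 : t ^ (8:ℕ) = D := by
    rw [htdef, ← Real.rpow_natCast (D ^ ((1:ℝ)/8)) 8, ← Real.rpow_mul hD0.le]
    norm_num
  have h78 : D ^ ((7:ℝ)/8) = t ^ (7:ℕ) := by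
    rw [htdef, ← Real.rpow_natCast (D ^ ((1:ℝ)/8)) 7, ← Real.rpow_mul hD0.le]
    norm_num
  have h58 : D ^ ((5:ℝ)/8) = t ^ (5:ℕ) := by
    rw [htdef, ← Real.rpow_natCast (D ^ ((1:ℝ)/8)) 5, ← Real.rpow_mul hD0.le]
    norm_num
  have hinv : D ^ (-(1/8 : ℝ)) = t⁻¹ := by
    rw [Real.rpow_neg hD0.le, htdef]
  have hdelta : deltaOf d = (t^7 - t^5)/2 := by
    rw [deltaOf, ← hDdef]
    rw [show (7/8 : ℝ) = (7:ℝ)/8 by norm_num, show (5/8 : ℝ) = (5:ℝ)/8 by norm_num,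
      h78, h58]
  set N := (n : ℝ) with hNdef
  have hN1 : (1:ℝ) ≤ N := by rw [hNdef]; exact_mod_cast hn
  have hN0 : (0:ℝ) < N := by linarith
  set b := (B.card : ℝ) with hbdef
  rw [hinv] at hcon
  -- hcon : N * t⁻¹ ≤ b
  have hbpos : 0 < b := lt_of_lt_of_le (by positivity) hcon
  have hβ : t⁻¹ ≤ b / N := (le_div_iff₀ hN0).2 (by linarith [hcon])
  have hBne : B.Nonempty := by
    have h0 : (0:ℝ) < (B.card : ℝ) := hbdef ▸ hbpos
    exact Finset.card_pos.1 (by exact_mod_cast h0)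
  -- test vector
  set x : V → ℝ := fun v => (if v ∈ B then (1:ℝ) else 0) - b / N with hxdef
  have hind : ∀ (s : Finset V), ∑ u ∈ s, (if u ∈ B then (1:ℝ) else 0)
      = ((s ∩ B).card : ℝ) := by
    intro s
    rw [Finset.sum_ite_mem, Finset.sum_const, nsmul_eq_mul, mul_one]
  have hsumx : ∑ v, x v = 0 := by
    simp only [hxdef, Finset.sum_sub_distrib, hind, Finset.univ_inter,
      Finset.sum_const, Finset.card_univ, hcard, nsmul_eq_mul]
    rw [← hbdef, ← hNdef]
    field_simp
    ring
  have hxsq : ∑ v, (x v)^2 = b * (1 - b/N) := by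
    have hterm : ∀ v, (x v)^2
        = (if v ∈ B then (1:ℝ) else 0) * (1 - 2*(b/N)) + (b/N)^2 := by
      intro v
      by_cases h : v ∈ B <;> simp [hxdef, h] <;> ring
    rw [Finset.sum_congr rfl (fun v _ => hterm v), Finset.sum_add_distrib,
      ← Finset.sum_mul, hind, Finset.univ_inter, Finset.sum_const,
      Finset.card_univ, hcard, nsmul_eq_mul, ← hbdef, ← hNdef]
    field_simp
    ring
  have hAx : ∀ v, (G.adjMatrix ℝ).mulVec x v
      = ((G.neighborFinset v ∩ B).card : ℝ) - D * (b/N) := by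
    intro v
    rw [SimpleGraph.adjMatrix_mulVec_apply, hxdef]
    rw [Finset.sum_sub_distrib, hind, Finset.sum_const, nsmul_eq_mul]
    have : (G.neighborFinset v).card = d := hreg v
    rw [this, hDdef]
  have hbN : b ≤ N := by
    rw [hbdef, hNdef, ← hcard]
    exact_mod_cast Finset.card_le_univ B
  clear_value x b B t D N
  -- spectral bound, squared
  have hSA : (0:ℝ) ≤ ∑ v, ((G.adjMatrix ℝ).mulVec x v)^2 := by positivity
  have hmain : ∑ v, ((G.adjMatrix ℝ).mulVec x v)^2 ≤ 4*(D-1)*(b*(1-b/N)) := by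
    have hs := hspec x hsumx
    rw [hxsq] at hs
    have hb1 : (0:ℝ) ≤ b * (1 - b/N) := by
      have : b/N ≤ 1 := (div_le_one hN0).2 hbN
      nlinarith
    calc ∑ v, ((G.adjMatrix ℝ).mulVec x v)^2
        = (Real.sqrt (∑ v, ((G.adjMatrix ℝ).mulVec x v)^2))^2 :=
          (Real.sq_sqrt hSA).symm
      _ ≤ (2 * Real.sqrt (D-1) * Real.sqrt (b*(1-b/N)))^2 := by
          apply pow_le_pow_left₀ (Real.sqrt_nonneg _) hs
      _ = 4*(D-1)*(b*(1-b/N)) := by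
          rw [mul_pow, mul_pow, Real.sq_sqrt (by linarith : (0:ℝ) ≤ D - 1),
            Real.sq_sqrt hb1]
          ring
  -- lower bound on each bad vertex
  set c : ℝ := (t^7 + t^5)/2 with hcdef
  have h7 : (1:ℝ) ≤ t^7 := by calc (1:ℝ) = 1^7 := by norm_num
                                  _ ≤ t^7 := pow_le_pow_left₀ zero_le_one ht1 7
  have h5 : (1:ℝ) ≤ t^5 := by calc (1:ℝ) = 1^5 := by norm_num
                                  _ ≤ t^5 := pow_le_pow_left₀ zero_le_one ht1 5
  have hc1 : (1:ℝ) ≤ c := by rw [hcdef]; linarith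
  have hDβ : t^7 ≤ D * (b/N) := by
    have := mul_le_mul_of_nonneg_left hβ hD0.le
    have e : D * t⁻¹ = t^7 := by
      rw [← ht8]; field_simp
    linarith [e ▸ this]
  have hlt : ∀ v ∈ B, c^2 < ((G.adjMatrix ℝ).mulVec x v)^2 := by
    intro v hv
    rw [hBdef] at hv
    have hvX : ((G.neighborFinset v ∩ X).card : ℝ) < deltaOf d :=
      (Finset.mem_filter.1 hv).2
    have hBX : ((G.neighborFinset v ∩ B).card : ℝ) ≤ ((G.neighborFinset v ∩ X).card : ℝ) := by
      have : G.neighborFinset v ∩ B ⊆ G.neighborFinset v ∩ X :=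
        Finset.inter_subset_inter_left (hBdef ▸ Finset.filter_subset _ X)
      exact_mod_cast Finset.card_le_card this
    have hneg : (G.adjMatrix ℝ).mulVec x v < -c := by
      rw [hAx v, hcdef]
      rw [hdelta] at hvX
      linarith
    nlinarith [hneg, hc1]
  have hsumB : b * c^2 < ∑ v ∈ B, ((G.adjMatrix ℝ).mulVec x v)^2 := by
    have h := Finset.sum_lt_sum_of_nonempty hBne hlt
    rw [Finset.sum_const, nsmul_eq_mul] at h
    rw [hbdef]
    exact h
  have hsub : ∑ v ∈ B, ((G.adjMatrix ℝ).mulVec x v)^2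
      ≤ ∑ v, ((G.adjMatrix ℝ).mulVec x v)^2 :=
    Finset.sum_le_sum_of_subset_of_nonneg (Finset.subset_univ B)
      (fun _ _ _ => sq_nonneg _)
  -- combine
  have hfin1 : b * c^2 < b * (4*(D-1)*(1 - b/N)) := by
    have h2 := lt_of_lt_of_le (lt_of_lt_of_le hsumB hsub) hmain
    have heq : (4:ℝ)*(D-1)*(b*(1-b/N)) = b*(4*(D-1)*(1-b/N)) := by ring
    rw [heq] at h2
    exact h2
  have hfin2 : c^2 < 4*(D-1)*(1 - b/N) := (mul_lt_mul_iff_right₀ hbpos).1 hfin1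
  have hfin3 : 4*(D-1)*(1 - b/N) ≤ 4*(D-1)*(1 - t⁻¹) :=
    mul_le_mul_of_nonneg_left (by linarith) (by linarith)
  have hkey : 4*(D-1)*(1 - t⁻¹) ≤ c^2 := by
    have := key_ineq t ht1
    rw [ht8] at this
    rw [hcdef]
    exact this
  linarith
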